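/- Let a ∈ (0, 1/2), D ≥ 1, x₀ ∈ ℝ^D, and ᾱ, ᾱ' ∈ [a, 1-a]. Then D_KL(N(√ᾱ' x₀, (1-ᾱ')I) ‖ N(√ᾱ x₀, (1-ᾱ)I)) ≤ [D(1-a)²/(4a⁴) + ‖x₀‖²/(8a²)] · |ᾱ' - ᾱ|². -/

import Mathlib

/-- KL divergence between the isotropic Gaussians `N(μ', v'I)` and `N(μ, vI)` on `ℝ^D`:
`½ [D (v'/v - 1 - log(v'/v)) + ‖μ' - μ‖²/v]`. -/
noncomputable def klIso (D : ℕ) (μ μ' : EuclideanSpace ℝ (Fin D)) (v v' : ℝ) : ℝ :=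
  (1 / 2) * ((D : ℝ) * (v' / v - 1 - Real.log (v' / v)) + ‖μ' - μ‖ ^ 2 / v)

lemma log_lower {r : ℝ} (hr : 1 ≤ r) : r - 1 - (r - 1) ^ 2 / 2 ≤ Real.log r := by
  have key : MonotoneOn (fun x : ℝ => Real.log x - (x - 1) + (x - 1) ^ 2 / 2) (Set.Ici 1) := by
    apply monotoneOn_of_hasDerivWithinAt_nonneg (convex_Ici 1)
      (f' := fun x => x⁻¹ - 1 + (x - 1))
    · apply ContinuousOn.add
      · exact (Real.continuousOn_log.mono (by intro x hx; simp at hx ⊢; linarith)).sub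
          (by fun_prop)
      · fun_prop
    · intro x hx
      rw [interior_Ici] at hx
      have hx0 : x ≠ 0 := by simp at hx; linarith
      have : HasDerivAt (fun x : ℝ => Real.log x - (x - 1) + (x - 1) ^ 2 / 2)
          (x⁻¹ - 1 + (x - 1)) x := by
        have h1 := (Real.hasDerivAt_log hx0).sub ((hasDerivAt_id x).sub_const 1)
        have h2 : HasDerivAt (fun x : ℝ => (x - 1) ^ 2 / 2) (x - 1) x := by
          have := (((hasDerivAt_id x).sub_const 1).pow 2).div_const 2
          simpa using this
        exact h1.add h2
      exact this.hasDerivWithinAt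
    · intro x hx
      rw [interior_Ici] at hx
      simp only [Set.mem_Ioi] at hx
      have hx0 : (0:ℝ) < x := by linarith
      have h : x⁻¹ * x = 1 := inv_mul_cancel₀ hx0.ne'
      nlinarith [sq_nonneg (x - 1), inv_pos.2 hx0]
  have := key (Set.self_mem_Ici) (Set.mem_Ici.2 hr) hr
  simp only [Real.log_one] at this
  nlinarith [this]

lemma log_upper {r : ℝ} (hr : 1 ≤ r) : Real.log r ≤ (r - 1 / r) / 2 := by
  have key : MonotoneOn (fun x : ℝ => (x - 1 / x) / 2 - Real.log x) (Set.Ici 1) := by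
    apply monotoneOn_of_hasDerivWithinAt_nonneg (convex_Ici 1)
      (f' := fun x => (1 + 1 / x ^ 2) / 2 - x⁻¹)
    · apply ContinuousOn.sub
      · apply ContinuousOn.div_const
        apply ContinuousOn.sub continuousOn_id
        exact continuousOn_const.div continuousOn_id (by intro x hx; simp at hx ⊢; linarith)
      · exact Real.continuousOn_log.mono (by intro x hx; simp at hx ⊢; linarith)
    · intro x hx
      rw [interior_Ici] at hx
      have hx0 : x ≠ 0 := by simp at hx; linarith
      have : HasDerivAt (fun x : ℝ => (x - 1 / x) / 2 - Real.log x)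
          ((1 + 1 / x ^ 2) / 2 - x⁻¹) x := by
        have h1 : HasDerivAt (fun x : ℝ => 1 / x) (-(1 / x ^ 2)) x := by
          simpa using (hasDerivAt_inv hx0)
        have h2 := (((hasDerivAt_id x).sub h1).div_const 2).sub (Real.hasDerivAt_log hx0)
        exact h2.congr_deriv (by ring)
      exact this.hasDerivWithinAt
    · intro x hx
      rw [interior_Ici] at hx
      simp only [Set.mem_Ioi] at hx
      have hx0 : (0:ℝ) < x := by linarith
      have h : x⁻¹ * x = 1 := inv_mul_cancel₀ hx0.ne'
      have h2 : 1 / x ^ 2 = x⁻¹ * x⁻¹ := by field_simp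
      rw [h2]
      nlinarith [sq_nonneg (x⁻¹ - 1), inv_pos.2 hx0, sq_nonneg (x - 1)]
  have := key (Set.self_mem_Ici) (Set.mem_Ici.2 hr) hr
  simp only [Real.log_one] at this
  nlinarith [this]

lemma ratio_bound {a v v' : ℝ} (ha : 0 < a) (hv : a ≤ v) (hv' : a ≤ v') :
    v' / v - 1 - Real.log (v' / v) ≤ (v' - v) ^ 2 / (2 * a ^ 2) := by
  have hv0 : (0:ℝ) < v := lt_of_lt_of_le ha hv
  have hv'0 : (0:ℝ) < v' := lt_of_lt_of_le ha hv'
  rcases le_total v v' with hle | hle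
  · have hr : 1 ≤ v' / v := (one_le_div hv0).2 hle
    have h1 := log_lower hr
    have h2 : (v' / v - 1) ^ 2 / 2 ≤ (v' - v) ^ 2 / (2 * a ^ 2) := by
      have e : v' / v - 1 = (v' - v) / v := by field_simp
      rw [e, div_pow, div_div, div_le_div_iff₀ (by positivity) (by positivity)]
      have hav : a ^ 2 ≤ v ^ 2 := by nlinarith
      nlinarith [mul_le_mul_of_nonneg_left hav (sq_nonneg (v' - v))]
    linarith
  · have hr : 1 ≤ v / v' := (one_le_div hv'0).2 hle
    have h1 := log_upper hr
    have hlog : Real.log (v' / v) = - Real.log (v / v') := by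
      rw [← Real.log_inv]; congr 1; rw [inv_div]
    have hd : 1 / (v / v') = v' / v := one_div_div _ _
    rw [hd] at h1
    have e : v' / v - 1 + (v / v' - v' / v) / 2 = (v - v') ^ 2 / (2 * (v * v')) := by
      field_simp; ring
    have h2 : (v - v') ^ 2 / (2 * (v * v')) ≤ (v' - v) ^ 2 / (2 * a ^ 2) := by
      rw [div_le_div_iff₀ (by positivity) (by positivity)]
      nlinarith [sq_nonneg (v - v'), mul_le_mul hv hv' ha.le hv0.le]
    linarith

set_option maxHeartbeats 1000000 in
/-- For `a ∈ (0,1/2)`, `D ≥ 1`, `x₀ ∈ ℝ^D`, and `ᾱ, ᾱ' ∈ [a, 1-a]`,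
`D_KL(N(√ᾱ' x₀, (1-ᾱ')I) ‖ N(√ᾱ x₀, (1-ᾱ)I))
  ≤ [D(1-a)²/(4a⁴) + ‖x₀‖²/(8a²)] |ᾱ' - ᾱ|²`. -/
theorem kl_schedule_perturbation_bound (D : ℕ) (hD : 1 ≤ D)
    (a : ℝ) (ha : a ∈ Set.Ioo (0 : ℝ) (1 / 2))
    (x₀ : EuclideanSpace ℝ (Fin D)) (ᾱ ᾱ' : ℝ)
    (hᾱ : ᾱ ∈ Set.Icc a (1 - a)) (hᾱ' : ᾱ' ∈ Set.Icc a (1 - a)) :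
    klIso D (Real.sqrt ᾱ • x₀) (Real.sqrt ᾱ' • x₀) (1 - ᾱ) (1 - ᾱ') ≤
      ((D : ℝ) * (1 - a) ^ 2 / (4 * a ^ 4) + ‖x₀‖ ^ 2 / (8 * a ^ 2)) *
        |ᾱ' - ᾱ| ^ 2 := by
  obtain ⟨ha0, ha12⟩ := ha
  obtain ⟨h1, h2⟩ := hᾱ
  obtain ⟨h1', h2'⟩ := hᾱ'
  set v : ℝ := 1 - ᾱ with hvdef
  set v' : ℝ := 1 - ᾱ' with hv'def
  have hv : a ≤ v := by simp [hvdef]; linarith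
  have hv' : a ≤ v' := by simp [hv'def]; linarith
  have hv0 : (0:ℝ) < v := lt_of_lt_of_le ha0 hv
  have hG : v' / v - 1 - Real.log (v' / v) ≤ (ᾱ' - ᾱ) ^ 2 / (2 * a ^ 2) := by
    have hrb := ratio_bound ha0 hv hv'
    have e : (v' - v) ^ 2 = (ᾱ' - ᾱ) ^ 2 := by rw [hvdef, hv'def]; ring
    rw [e] at hrb
    exact hrb
  -- mean term
  have hαnn : 0 ≤ ᾱ := le_trans ha0.le h1
  have hα'nn : 0 ≤ ᾱ' := le_trans ha0.le h1'
  have hs1 : Real.sqrt ᾱ ^ 2 = ᾱ := Real.sq_sqrt hαnn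
  have hs2 : Real.sqrt ᾱ' ^ 2 = ᾱ' := Real.sq_sqrt hα'nn
  have hsa : Real.sqrt a ≤ Real.sqrt ᾱ := Real.sqrt_le_sqrt h1
  have hsa' : Real.sqrt a ≤ Real.sqrt ᾱ' := Real.sqrt_le_sqrt h1'
  have hsa2 : Real.sqrt a ^ 2 = a := Real.sq_sqrt ha0.le
  have hsanng : 0 < Real.sqrt a := Real.sqrt_pos.2 ha0
  have hmean : (Real.sqrt ᾱ' - Real.sqrt ᾱ) ^ 2 * (4 * a) ≤ (ᾱ' - ᾱ) ^ 2 := by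
    have hprod : (Real.sqrt ᾱ' - Real.sqrt ᾱ) * (Real.sqrt ᾱ' + Real.sqrt ᾱ) = ᾱ' - ᾱ := by
      nlinarith [hs1, hs2]
    have h4a : 4 * a ≤ (Real.sqrt ᾱ' + Real.sqrt ᾱ) ^ 2 := by
      nlinarith [hsa2, hsanng]
    have eΔ : (ᾱ' - ᾱ) ^ 2
        = (Real.sqrt ᾱ' - Real.sqrt ᾱ) ^ 2 * (Real.sqrt ᾱ' + Real.sqrt ᾱ) ^ 2 := by
      rw [← hprod]; ring
    rw [eΔ]
    exact mul_le_mul_of_nonneg_left h4a (sq_nonneg _)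
  have hnorm : ‖Real.sqrt ᾱ' • x₀ - Real.sqrt ᾱ • x₀‖ ^ 2
      = (Real.sqrt ᾱ' - Real.sqrt ᾱ) ^ 2 * ‖x₀‖ ^ 2 := by
    rw [← sub_smul, norm_smul, Real.norm_eq_abs, mul_pow, sq_abs]
  have hM : (Real.sqrt ᾱ' - Real.sqrt ᾱ) ^ 2 * ‖x₀‖ ^ 2 / v
      ≤ (ᾱ' - ᾱ) ^ 2 * ‖x₀‖ ^ 2 / (4 * a ^ 2) := by
    rw [div_le_div_iff₀ hv0 (by positivity)]
    have hmx := mul_le_mul_of_nonneg_right hmean (mul_nonneg ha0.le (sq_nonneg ‖x₀‖))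
    have hvx := mul_le_mul_of_nonneg_right hv
      (mul_nonneg (sq_nonneg (ᾱ' - ᾱ)) (sq_nonneg ‖x₀‖))
    nlinarith [hmx, hvx]
  rw [klIso, sq_abs, hnorm]
  have hDpos : (0:ℝ) ≤ (D:ℝ) := Nat.cast_nonneg D
  have hGD : (D:ℝ) * (v' / v - 1 - Real.log (v' / v))
      ≤ (D:ℝ) * ((ᾱ' - ᾱ) ^ 2 / (2 * a ^ 2)) :=
    mul_le_mul_of_nonneg_left hG hDpos
  have hcoef : 1 / (4 * a ^ 2) ≤ (1 - a) ^ 2 / (4 * a ^ 4) := by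
    rw [div_le_div_iff₀ (by positivity) (by positivity)]
    have haa : a ≤ 1 - a := by linarith
    calc 1 * (4 * a ^ 4) = a ^ 2 * (4 * a ^ 2) := by ring
      _ ≤ (1 - a) ^ 2 * (4 * a ^ 2) :=
          mul_le_mul_of_nonneg_right (pow_le_pow_left₀ ha0.le haa 2) (by positivity)
  have hfinal : (1/2 : ℝ) * ((D:ℝ) * ((ᾱ' - ᾱ) ^ 2 / (2 * a ^ 2))
      + (ᾱ' - ᾱ) ^ 2 * ‖x₀‖ ^ 2 / (4 * a ^ 2))
      ≤ ((D : ℝ) * (1 - a) ^ 2 / (4 * a ^ 4) + ‖x₀‖ ^ 2 / (8 * a ^ 2)) * (ᾱ' - ᾱ) ^ 2 := by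
    have e1 : (1/2 : ℝ) * ((D:ℝ) * ((ᾱ' - ᾱ) ^ 2 / (2 * a ^ 2))
        + (ᾱ' - ᾱ) ^ 2 * ‖x₀‖ ^ 2 / (4 * a ^ 2))
        = (D:ℝ) * (ᾱ' - ᾱ) ^ 2 * (1 / (4 * a ^ 2)) + ‖x₀‖ ^ 2 / (8 * a ^ 2) * (ᾱ' - ᾱ) ^ 2 := by
      ring
    have e2 : ((D : ℝ) * (1 - a) ^ 2 / (4 * a ^ 4) + ‖x₀‖ ^ 2 / (8 * a ^ 2)) * (ᾱ' - ᾱ) ^ 2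
        = (D:ℝ) * (ᾱ' - ᾱ) ^ 2 * ((1 - a) ^ 2 / (4 * a ^ 4))
          + ‖x₀‖ ^ 2 / (8 * a ^ 2) * (ᾱ' - ᾱ) ^ 2 := by
      ring
    rw [e1, e2]
    have := mul_le_mul_of_nonneg_left hcoef
      (mul_nonneg (Nat.cast_nonneg D : (0:ℝ) ≤ (D:ℝ)) (sq_nonneg (ᾱ' - ᾱ)))
    linarith
  linarith
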